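/- For every s ∈ S, the following identity holds in the formal power series ring ℂ⟦Y⟧: (Σ_{n≥0} a_n^s Y^{2+4n})² = Y⁴ − Σ_{k≥0} a_k^{σ(s)} Y^{8+16k}. -/

import Mathlib

noncomputable section

/-- The space of binary sequences `{0,1}^ℕ`. -/
abbrev BinSeq := ℕ → Fin 2

/-- The left-shift map `σ`. -/
def shift (s : BinSeq) : BinSeq := fun n => s (n + 1)

/-- `a : S → ℕ → ℂ` satisfies the recursion defining the coefficients `aₙˢ`:
`a₀ˢ = (−1)^{s₀}` and `a_{n+1}ˢ = −(1/(2a₀ˢ)) Σ_{i+j=n+1, i,j≥1} aᵢˢ aⱼˢ` if `4 ∤ n`,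
with the extra term `−a_{n/4}^{σ(s)}/(2a₀ˢ)` if `4 ∣ n`. -/
def IsCoeffFamily (a : BinSeq → ℕ → ℂ) : Prop :=
  (∀ s : BinSeq, a s 0 = (-1 : ℂ) ^ (s 0 : ℕ)) ∧
  (∀ (s : BinSeq) (n : ℕ), a s (n + 1) =
    if 4 ∣ n then
      -(a (shift s) (n / 4)) / (2 * a s 0)
        - (∑ i ∈ Finset.Ico 1 (n + 1), a s i * a s (n + 1 - i)) / (2 * a s 0)
    else
      -(∑ i ∈ Finset.Ico 1 (n + 1), a s i * a s (n + 1 - i)) / (2 * a s 0))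

/-- The one-variable series `Σ_{n≥0} aₙˢ Y^(2+4n) ∈ ℂ⟦Y⟧`. -/
def gSer (a : BinSeq → ℕ → ℂ) (s : BinSeq) : PowerSeries ℂ :=
  PowerSeries.mk fun k => if k % 4 = 2 then a s ((k - 2) / 4) else 0

/-- The one-variable series `Σ_{k≥0} a_k^{σ(s)} Y^(8+16k) ∈ ℂ⟦Y⟧`. -/
def hSer (a : BinSeq → ℕ → ℂ) (s : BinSeq) : PowerSeries ℂ :=
  PowerSeries.mk fun k => if k % 16 = 8 then a (shift s) ((k - 8) / 16) else 0


lemma a0_sq (a : BinSeq → ℕ → ℂ) (ha : IsCoeffFamily a) (s : BinSeq) :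
    a s 0 * a s 0 = 1 := by
  rw [ha.1 s, ← pow_add, ← two_mul, pow_mul]
  norm_num

lemma two_a0_ne (a : BinSeq → ℕ → ℂ) (ha : IsCoeffFamily a) (s : BinSeq) :
    (2 : ℂ) * a s 0 ≠ 0 := by
  have h := a0_sq a ha s
  intro h0
  have hne : a s 0 ≠ 0 := by intro h1; rw [h1] at h; simp at h
  simpa [hne] using h0

lemma key (a : BinSeq → ℕ → ℂ) (ha : IsCoeffFamily a) (s : BinSeq) (m : ℕ) :
    ∑ p ∈ Finset.HasAntidiagonal.antidiagonal m, a s p.1 * a s p.2 =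
      if m = 0 then 1 else
        if 4 ∣ (m - 1) then -(a (shift s) ((m - 1) / 4)) else 0 := by
  cases m with
  | zero => simp [a0_sq a ha s]
  | succ n =>
    rw [Finset.Nat.sum_antidiagonal_eq_sum_range_succ_mk, Finset.sum_range_succ,
      Finset.range_eq_Ico, Finset.sum_eq_sum_Ico_succ_bot (by omega)]
    simp only [Nat.sub_self, Nat.sub_zero, Nat.add_sub_cancel, Nat.succ_ne_zero, if_false,
      Nat.add_sub_cancel_left]
    have hrec := ha.2 s n
    have hne := two_a0_ne a ha s
    have ha0 : a s 0 ≠ 0 := right_ne_zero_of_mul hne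
    by_cases h4 : 4 ∣ n
    · rw [if_pos h4] at hrec ⊢
      rw [hrec]; field_simp; ring
    · rw [if_neg h4] at hrec ⊢
      rw [hrec]; field_simp; ring

/-- For every `s ∈ S`, in `ℂ⟦Y⟧` one has
`(Σ_{n≥0} aₙˢ Y^(2+4n))² = Y⁴ − Σ_{k≥0} a_k^{σ(s)} Y^(8+16k)`. -/
theorem stmt1 (a : BinSeq → ℕ → ℂ) (ha : IsCoeffFamily a) (s : BinSeq) :
    (gSer a s) ^ 2 = (PowerSeries.X : PowerSeries ℂ) ^ 4 - hSer a s := by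
  ext d
  rw [pow_two, PowerSeries.coeff_mul, map_sub, PowerSeries.coeff_X_pow]
  simp only [gSer, hSer, PowerSeries.coeff_mk]
  by_cases hd : d % 4 = 0 ∧ 4 ≤ d
  · obtain ⟨m, rfl⟩ : ∃ m, d = 4 + 4 * m := ⟨(d - 4) / 4, by omega⟩
    have hstep : ∑ p ∈ Finset.HasAntidiagonal.antidiagonal (4 + 4 * m),
        (if p.1 % 4 = 2 then a s ((p.1 - 2) / 4) else 0) *
          (if p.2 % 4 = 2 then a s ((p.2 - 2) / 4) else 0) =
        ∑ p ∈ Finset.HasAntidiagonal.antidiagonal m, a s p.1 * a s p.2 := by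
      rw [← Finset.sum_filter_of_ne (p := fun x => x.1 % 4 = 2 ∧ x.2 % 4 = 2)
        (by intro x hx hne; by_contra hc; push_neg at hc
            rcases Classical.em (x.1 % 4 = 2) with h1 | h1
            · simp [h1, hc h1] at hne
            · simp [h1] at hne)]
      refine Finset.sum_nbij' (fun x => ((x.1 - 2) / 4, (x.2 - 2) / 4))
        (fun x => (2 + 4 * x.1, 2 + 4 * x.2)) ?_ ?_ ?_ ?_ ?_
      · intro x hx
        simp only [Finset.mem_filter, Finset.HasAntidiagonal.mem_antidiagonal] at hx ⊢
        omega
      · intro x hx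
        simp only [Finset.mem_filter, Finset.HasAntidiagonal.mem_antidiagonal] at hx ⊢
        omega
      · intro x hx
        simp only [Finset.mem_filter, Finset.HasAntidiagonal.mem_antidiagonal] at hx
        ext <;> simp <;> omega
      · intro x hx
        ext <;> simp <;> omega
      · intro x hx
        simp only [Finset.mem_filter, Finset.HasAntidiagonal.mem_antidiagonal] at hx
        rw [if_pos hx.2.1, if_pos hx.2.2]
    rw [hstep, key a ha s]
    have h16 : (4 + 4 * m) % 16 = 8 ↔ (m ≠ 0 ∧ 4 ∣ (m - 1)) := by omega
    by_cases hm : m = 0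
    · subst hm; norm_num
    · rw [if_neg hm]
      rw [if_neg (by omega : ¬ (4 + 4 * m = 4))]
      by_cases hdvd : 4 ∣ (m - 1)
      · rw [if_pos hdvd, if_pos (h16.2 ⟨hm, hdvd⟩)]
        have h8 : (4 + 4 * m - 8) / 16 = (m - 1) / 4 := by omega
        rw [h8]; ring
      · rw [if_neg hdvd, if_neg (fun h => hdvd (h16.1 h).2)]
        ring
  · rw [Finset.sum_eq_zero (by
      intro x hx
      simp only [Finset.HasAntidiagonal.mem_antidiagonal] at hx
      by_cases h1 : x.1 % 4 = 2
      · by_cases h2 : x.2 % 4 = 2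
        · omega
        · simp [h2]
      · simp [h1])]
    rw [if_neg (by omega : ¬ d = 4), if_neg (by omega : ¬ d % 16 = 8)]
    ring
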